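/- For two univariate Gaussian distributions N(μ₁, σ₁²) and N(μ₂, σ₂²), the squared 2-Wasserstein distance equals (μ₁ − μ₂)² + (σ₁ − σ₂)², where the Wasserstein distance is taken with respect to the Euclidean metric on ℝ. -/

import Mathlib

open MeasureTheory ProbabilityTheory Real

section WassersteinGaussianAux

lemma rpow_two_eq (x : ℝ) : x ^ (2:ℝ) = x ^ 2 := by
  rw [show (2:ℝ) = ((2:ℕ):ℝ) by norm_num, Real.rpow_natCast]

lemma integrable_sq_exp : Integrable (fun x : ℝ => x ^ 2 * rexp (-(1/2) * x ^ 2)) := by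
  have h := integrable_rpow_mul_exp_neg_mul_sq (b := 1/2) (by norm_num) (s := 2) (by norm_num)
  simpa only [rpow_two_eq] using h

lemma int_sq_exp : ∫ x : ℝ, x ^ 2 * rexp (-(1/2) * x ^ 2) = Real.sqrt (2 * π) := by
  have habs : (fun x : ℝ => x ^ 2 * rexp (-(1/2) * x ^ 2))
      = fun x : ℝ => (fun y : ℝ => y ^ 2 * rexp (-(1/2) * y ^ 2)) |x| := by
    funext x; simp [sq_abs]
  rw [habs, integral_comp_abs (f := fun y : ℝ => y ^ 2 * rexp (-(1/2) * y ^ 2))]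
  have h := integral_rpow_mul_exp_neg_mul_rpow (p := 2) (q := 2) (b := 1/2)
    (by norm_num) (by norm_num) (by norm_num)
  simp only [rpow_two_eq] at h
  rw [h]
  have h32 : Real.Gamma (((2:ℝ) + 1) / 2) = (1/2) * Real.sqrt π := by
    rw [show ((2:ℝ) + 1) / 2 = 1/2 + 1 by norm_num, Real.Gamma_add_one (by norm_num),
      Real.Gamma_one_half_eq]
  rw [h32]
  have hb : ((1:ℝ)/2) ^ (-((2:ℝ) + 1) / 2) = 2 * Real.sqrt 2 := by
    rw [show (-((2:ℝ)+1)/2) = -(3/2) by norm_num, Real.rpow_neg (by norm_num), one_div,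
      Real.inv_rpow (by norm_num), inv_inv,
      show ((3:ℝ)/2) = 1 + 1/2 by norm_num, Real.rpow_add (by norm_num), Real.rpow_one,
      ← Real.sqrt_eq_rpow]
  rw [hb]
  rw [Real.sqrt_mul (by norm_num : (0:ℝ) ≤ 2)]
  ring

lemma int_id_exp : ∫ x : ℝ, x * rexp (-(1/2) * x ^ 2) = 0 := by
  have h := integral_neg_eq_self (fun x : ℝ => x * rexp (-(1/2) * x ^ 2)) (volume : Measure ℝ)
  simp only [neg_sq, neg_mul, integral_neg] at h
  have h2 : ∫ x : ℝ, x * rexp (-(1/2) * x ^ 2) = ∫ x : ℝ, x * rexp (-(1/2 * x ^ 2)) := by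
    congr 1; funext x; ring_nf
  rw [h2]
  linarith

lemma pdf_eval (x : ℝ) :
    gaussianPDFReal 0 1 x = (Real.sqrt (2 * π))⁻¹ * rexp (-(1/2) * x ^ 2) := by
  rw [gaussianPDFReal]
  push_cast
  rw [mul_one, sub_zero]
  congr 1
  ring

lemma integral_N01 (g : ℝ → ℝ) :
    ∫ x, g x ∂(gaussianReal 0 1) = ∫ x, gaussianPDFReal 0 1 x * g x := by
  rw [gaussianReal_of_var_ne_zero 0 one_ne_zero,
    show gaussianPDF 0 1 = fun x => ((gaussianPDFReal 0 1 x).toNNReal : ENNReal) from rfl,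
    integral_withDensity_eq_integral_smul (measurable_gaussianPDFReal 0 1).real_toNNReal g]
  congr 1
  funext x
  rw [NNReal.smul_def, Real.coe_toNNReal _ (gaussianPDFReal_nonneg 0 1 x), smul_eq_mul]

lemma integrable_N01_iff (g : ℝ → ℝ) :
    Integrable g (gaussianReal 0 1) ↔ Integrable (fun x => gaussianPDFReal 0 1 x * g x) := by
  rw [gaussianReal_of_var_ne_zero 0 one_ne_zero,
    show gaussianPDF 0 1 = fun x => ((gaussianPDFReal 0 1 x).toNNReal : ENNReal) from rfl,
    integrable_withDensity_iff_integrable_smul (measurable_gaussianPDFReal 0 1).real_toNNReal]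
  constructor <;> intro h <;> refine h.congr (Filter.Eventually.of_forall fun x => ?_) <;>
    simp only [NNReal.smul_def, smul_eq_mul,
      Real.coe_toNNReal _ (gaussianPDFReal_nonneg 0 1 x)]

lemma std_sq_integrable : Integrable (fun x : ℝ => x ^ 2) (gaussianReal 0 1) := by
  rw [integrable_N01_iff]
  have h := integrable_sq_exp.const_mul (Real.sqrt (2 * π))⁻¹
  refine h.congr (Filter.Eventually.of_forall fun x => ?_)
  simp only [pdf_eval]; ring

lemma std_memℒp : MemLp (fun x : ℝ => x) 2 (gaussianReal 0 1) :=
  (memLp_two_iff_integrable_sq measurable_id.aestronglyMeasurable).2 std_sq_integrable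

lemma sqrt_two_pi_ne : Real.sqrt (2 * π) ≠ 0 :=
  ne_of_gt (Real.sqrt_pos.2 (by positivity))

lemma std_int_sq : ∫ x, x ^ 2 ∂(gaussianReal 0 1) = 1 := by
  rw [integral_N01]
  have h : ∀ x : ℝ, gaussianPDFReal 0 1 x * x ^ 2
      = (Real.sqrt (2 * π))⁻¹ * (x ^ 2 * rexp (-(1/2) * x ^ 2)) := fun x => by
    rw [pdf_eval]; ring
  simp_rw [h]
  rw [integral_const_mul, int_sq_exp, inv_mul_cancel₀ sqrt_two_pi_ne]

lemma std_int_id : ∫ x, x ∂(gaussianReal 0 1) = 0 := by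
  rw [integral_N01]
  have h : ∀ x : ℝ, gaussianPDFReal 0 1 x * x
      = (Real.sqrt (2 * π))⁻¹ * (x * rexp (-(1/2) * x ^ 2)) := fun x => by
    rw [pdf_eval]; ring
  simp_rw [h]
  rw [integral_const_mul, int_id_exp, mul_zero]

lemma gauss_eq_map (μ σ : ℝ) (hσ : 0 ≤ σ) :
    gaussianReal μ (σ ^ 2).toNNReal = (gaussianReal 0 1).map (fun z => σ * z + μ) := by
  have h1 : (fun z : ℝ => σ * z + μ) = (fun z => z + μ) ∘ (fun z => σ * z) := rfl
  rw [h1, ← Measure.map_map (measurable_add_const μ) (measurable_const_mul σ),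
    gaussianReal_map_const_mul σ, gaussianReal_map_add_const μ]
  congr 1
  · rw [mul_zero, zero_add]
  · ext
    simp [Real.coe_toNNReal _ (sq_nonneg σ)]

variable {μ σ : ℝ}

lemma htm (σ μ : ℝ) : Measurable (fun z : ℝ => σ * z + μ) :=
  (measurable_id.const_mul σ).add_const μ

lemma centered_memℒp (hσ : 0 ≤ σ) :
    MemLp (fun x : ℝ => x - μ) 2 (gaussianReal μ (σ ^ 2).toNNReal) := by
  rw [gauss_eq_map μ σ hσ]
  rw [memLp_map_measure_iff (by fun_prop : Measurable fun x : ℝ => x - μ).aestronglyMeasurable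
    (htm σ μ).aemeasurable]
  have : ((fun x : ℝ => x - μ) ∘ fun z => σ * z + μ) = fun z : ℝ => σ * z := by
    funext z; simp
  rw [this]
  exact std_memℒp.const_mul σ

lemma centered_int (hσ : 0 ≤ σ) :
    ∫ x, (x - μ) ∂(gaussianReal μ (σ ^ 2).toNNReal) = 0 := by
  rw [gauss_eq_map μ σ hσ,
    integral_map (htm σ μ).aemeasurable (by fun_prop : Measurable fun x : ℝ => x - μ).aestronglyMeasurable]
  simp only [add_sub_cancel_right]
  rw [integral_const_mul, std_int_id, mul_zero]

lemma centered_int_sq (hσ : 0 ≤ σ) :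
    ∫ x, (x - μ) ^ 2 ∂(gaussianReal μ (σ ^ 2).toNNReal) = σ ^ 2 := by
  rw [gauss_eq_map μ σ hσ,
    integral_map (htm σ μ).aemeasurable
      (by fun_prop : Measurable fun x : ℝ => (x - μ) ^ 2).aestronglyMeasurable]
  simp only [add_sub_cancel_right, mul_pow]
  rw [integral_const_mul, std_int_sq, mul_one]

lemma abs_mul_le_half (a b : ℝ) : |a| * |b| ≤ (a ^ 2 + b ^ 2) / 2 := by
  have h := two_mul_le_add_sq |a| |b|
  rw [sq_abs, sq_abs] at h
  linarith

end WassersteinGaussianAux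

open MeasureTheory ProbabilityTheory

/-- The squared 2-Wasserstein distance between `N(μ₁,σ₁²)` and `N(μ₂,σ₂²)` (the infimum over
couplings `γ` of `∫ (x - y)² dγ`) equals `(μ₁ - μ₂)² + (σ₁ - σ₂)²`. -/
theorem wasserstein2_sq_gaussianReal (μ₁ μ₂ σ₁ σ₂ : ℝ) (hσ₁ : 0 ≤ σ₁) (hσ₂ : 0 ≤ σ₂) :
    sInf {r : ℝ | ∃ γ : Measure (ℝ × ℝ), IsProbabilityMeasure γ ∧
        γ.map Prod.fst = gaussianReal μ₁ (σ₁ ^ 2).toNNReal ∧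
        γ.map Prod.snd = gaussianReal μ₂ (σ₂ ^ 2).toNNReal ∧
        r = ∫ p, (p.1 - p.2) ^ 2 ∂γ}
      = (μ₁ - μ₂) ^ 2 + (σ₁ - σ₂) ^ 2 := by
  set v : ℝ := (μ₁ - μ₂) ^ 2 + (σ₁ - σ₂) ^ 2 with hv
  set S : Set ℝ := {r : ℝ | ∃ γ : Measure (ℝ × ℝ), IsProbabilityMeasure γ ∧
        γ.map Prod.fst = gaussianReal μ₁ (σ₁ ^ 2).toNNReal ∧
        γ.map Prod.snd = gaussianReal μ₂ (σ₂ ^ 2).toNNReal ∧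
        r = ∫ p, (p.1 - p.2) ^ 2 ∂γ} with hS
  -- the optimal coupling
  have hT : Measurable (fun z : ℝ => (σ₁ * z + μ₁, σ₂ * z + μ₂)) := by fun_prop
  have hmem : v ∈ S := by
    refine ⟨(gaussianReal 0 1).map (fun z => (σ₁ * z + μ₁, σ₂ * z + μ₂)), ?_, ?_, ?_, ?_⟩
    · exact Measure.isProbabilityMeasure_map hT.aemeasurable
    · rw [Measure.map_map measurable_fst hT]
      exact (gauss_eq_map μ₁ σ₁ hσ₁).symm
    · rw [Measure.map_map measurable_snd hT]
      exact (gauss_eq_map μ₂ σ₂ hσ₂).symm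
    · rw [integral_map hT.aemeasurable
        (by fun_prop : Measurable fun p : ℝ × ℝ => (p.1 - p.2) ^ 2).aestronglyMeasurable]
      have he : ∀ z : ℝ, ((σ₁ * z + μ₁) - (σ₂ * z + μ₂)) ^ 2
          = (σ₁ - σ₂) ^ 2 * z ^ 2 + ((2 * (σ₁ - σ₂) * (μ₁ - μ₂)) * z + (μ₁ - μ₂) ^ 2) := by
        intro z; ring
      simp only
      simp_rw [he]
      have i1 : Integrable (fun z : ℝ => (σ₁ - σ₂) ^ 2 * z ^ 2) (gaussianReal 0 1) := by
        exact std_sq_integrable.const_mul _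
      have i2 : Integrable (fun z : ℝ => (2 * (σ₁ - σ₂) * (μ₁ - μ₂)) * z) (gaussianReal 0 1) := by
        exact (std_memℒp.integrable one_le_two).const_mul _
      have i3 : Integrable (fun z : ℝ => (2 * (σ₁ - σ₂) * (μ₁ - μ₂)) * z + (μ₁ - μ₂) ^ 2)
          (gaussianReal 0 1) := by
        exact i2.add (integrable_const _)
      rw [integral_add i1 i3, integral_add i2 (integrable_const _),
        integral_const_mul, integral_const_mul, std_int_sq, std_int_id, integral_const,
        probReal_univ]
      simp [hv]; ring
  -- lower bound
  have hlb : ∀ r ∈ S, v ≤ r := by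
    rintro r ⟨γ, hγ, h1, h2, rfl⟩
    set U : ℝ × ℝ → ℝ := fun p => p.1 - μ₁ with hU
    set V : ℝ × ℝ → ℝ := fun p => p.2 - μ₂ with hVdef
    have hU2 : MemLp U 2 γ := by
      have h := centered_memℒp (μ := μ₁) hσ₁
      rw [← h1] at h
      exact (memLp_map_measure_iff
        (by fun_prop : Measurable fun x : ℝ => x - μ₁).aestronglyMeasurable
        measurable_fst.aemeasurable).1 h
    have hV2 : MemLp V 2 γ := by
      have h := centered_memℒp (μ := μ₂) hσ₂
      rw [← h2] at h
      exact (memLp_map_measure_iff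
        (by fun_prop : Measurable fun x : ℝ => x - μ₂).aestronglyMeasurable
        measurable_snd.aemeasurable).1 h
    have iU : Integrable U γ := hU2.integrable one_le_two
    have iV : Integrable V γ := hV2.integrable one_le_two
    have iU2 : Integrable (fun p => U p ^ 2) γ :=
      (memLp_two_iff_integrable_sq hU2.1).1 hU2
    have iV2 : Integrable (fun p => V p ^ 2) γ :=
      (memLp_two_iff_integrable_sq hV2.1).1 hV2
    have EU : ∫ p, U p ∂γ = 0 := by
      have h := centered_int (μ := μ₁) hσ₁
      rw [← h1, integral_map measurable_fst.aemeasurable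
        (by fun_prop : Measurable fun x : ℝ => x - μ₁).aestronglyMeasurable] at h
      exact h
    have EV : ∫ p, V p ∂γ = 0 := by
      have h := centered_int (μ := μ₂) hσ₂
      rw [← h2, integral_map measurable_snd.aemeasurable
        (by fun_prop : Measurable fun x : ℝ => x - μ₂).aestronglyMeasurable] at h
      exact h
    have EU2 : ∫ p, U p ^ 2 ∂γ = σ₁ ^ 2 := by
      have h := centered_int_sq (μ := μ₁) hσ₁
      rw [← h1, integral_map measurable_fst.aemeasurable
        (by fun_prop : Measurable fun x : ℝ => (x - μ₁) ^ 2).aestronglyMeasurable] at h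
      exact h
    have EV2 : ∫ p, V p ^ 2 ∂γ = σ₂ ^ 2 := by
      have h := centered_int_sq (μ := μ₂) hσ₂
      rw [← h2, integral_map measurable_snd.aemeasurable
        (by fun_prop : Measurable fun x : ℝ => (x - μ₂) ^ 2).aestronglyMeasurable] at h
      exact h
    have ibound : Integrable (fun p => (U p ^ 2 + V p ^ 2) / 2) γ := by
      exact (iU2.add iV2).div_const 2
    have iUV : Integrable (fun p => U p * V p) γ := by
      refine Integrable.mono' ibound (hU2.1.mul hV2.1)
        (Filter.Eventually.of_forall fun p => ?_)
      rw [Real.norm_eq_abs, abs_mul]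
      exact abs_mul_le_half _ _
    have hCS : ∫ p, U p * V p ∂γ ≤ σ₁ * σ₂ := by
      have hmono : ∫ p, U p * V p ∂γ ≤ ∫ p, |U p| * |V p| ∂γ := by
        refine integral_mono iUV (by simpa [abs_mul] using iUV.abs) fun p => ?_
        calc U p * V p ≤ |U p * V p| := le_abs_self _
        _ = |U p| * |V p| := abs_mul _ _
      have h2 : (ENNReal.ofReal (2:ℝ)) = 2 := by
        rw [ENNReal.ofReal_ofNat]
      have hhold := integral_mul_le_Lp_mul_Lq_of_nonneg
        Real.HolderConjugate.two_two
        (Filter.Eventually.of_forall fun p => abs_nonneg (U p))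
        (Filter.Eventually.of_forall fun p => abs_nonneg (V p))
        (h2 ▸ hU2.abs) (h2 ▸ hV2.abs)
      have hre : ∀ (f : ℝ × ℝ → ℝ), (∫ p, |f p| ^ (2:ℝ) ∂γ) = ∫ p, f p ^ 2 ∂γ := by
        intro f
        congr 1; funext p
        rw [show (2:ℝ) = ((2:ℕ):ℝ) by norm_num, Real.rpow_natCast, sq_abs]
      rw [hre U, hre V, EU2, EV2] at hhold
      have hs : ∀ (σ : ℝ), 0 ≤ σ → (σ ^ 2) ^ ((1:ℝ)/2) = σ := by
        intro σ hσ
        rw [← Real.rpow_natCast σ 2, ← Real.rpow_mul hσ]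
        norm_num
      rw [hs σ₁ hσ₁, hs σ₂ hσ₂] at hhold
      exact hmono.trans hhold
    set c : ℝ := μ₁ - μ₂ with hc
    have key : ∫ p, (p.1 - p.2) ^ 2 ∂γ
        = (∫ p, U p ^ 2 ∂γ) + (∫ p, V p ^ 2 ∂γ) - 2 * ∫ p, U p * V p ∂γ
          + (2 * c) * (∫ p, U p ∂γ) - (2 * c) * (∫ p, V p ∂γ) + c ^ 2 := by
      have hfe : (fun p : ℝ × ℝ => (p.1 - p.2) ^ 2)
          = fun p => (((U p ^ 2 + V p ^ 2 - 2 * (U p * V p)) + (2 * c) * U p)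
              - (2 * c) * V p) + c ^ 2 := by
        funext p; simp only [hU, hVdef, hc]; ring
      have j0 : Integrable (fun p => U p ^ 2 + V p ^ 2) γ := by exact iU2.add iV2
      have j1 : Integrable (fun p => U p ^ 2 + V p ^ 2 - 2 * (U p * V p)) γ := by
        exact j0.sub (iUV.const_mul 2)
      have j2 : Integrable (fun p => U p ^ 2 + V p ^ 2 - 2 * (U p * V p) + (2 * c) * U p) γ := by
        exact j1.add (iU.const_mul (2 * c))
      have j3 : Integrable
          (fun p => U p ^ 2 + V p ^ 2 - 2 * (U p * V p) + (2 * c) * U p - (2 * c) * V p) γ := by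
        exact j2.sub (iV.const_mul (2 * c))
      rw [hfe, integral_add j3 (integrable_const _), integral_sub j2 (iV.const_mul (2 * c)),
        integral_add j1 (iU.const_mul (2 * c)), integral_sub j0 (iUV.const_mul 2),
        integral_add iU2 iV2, integral_const_mul, integral_const_mul, integral_const_mul,
        integral_const, probReal_univ]
      simp
    rw [key, EU, EV, EU2, EV2, hv, hc]
    nlinarith [hCS]
  refine le_antisymm (csInf_le ⟨v, hlb⟩ hmem) (le_csInf ⟨v, hmem⟩ hlb)
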